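/- Let p be a prime and n ≥ 1. Let ψ : ℚ_p → ℂ^× be a nontrivial continuous additive character, and define the Fourier transform of a locally constant compactly supported φ : M_n(ℚ_p) → ℂ by φ̂(Y) = ∫_{M_n(ℚ_p)} φ(X) ψ(tr(XY)) dX, for a Haar measure on M_n(ℚ_p). If the support of φ is contained in the set of matrices whose characteristic polynomial is irreducible over ℚ_p, then φ̂ is a Lie algebra cusp form: for every proper flag in ℚ_p^n with nilpotent radical 𝔫 (with a Haar measure) and every X ∈ M_n(ℚ_p), ∫_𝔫 φ̂(X + U) dU = 0. -/

import Mathlib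

open Matrix

noncomputable section

/-- A proper flag in `ℚ_p^n`: a strictly increasing chain of `ℚ_p`-subspaces
`0 = V 0 ⊊ V 1 ⊊ ⋯ ⊊ V r = ℚ_p^n` with `r ≥ 2`. -/
structure ProperFlag (p n : ℕ) [Fact p.Prime] where
  r : ℕ
  two_le_r : 2 ≤ r
  V : Fin (r + 1) → Submodule ℚ_[p] (Fin n → ℚ_[p])
  strictMono : StrictMono V
  zero_eq_bot : V 0 = ⊥
  last_eq_top : V (Fin.last r) = ⊤

variable {p n : ℕ} [Fact p.Prime]

namespace ProperFlag

lemma mapsTo_of_mem {F : ProperFlag p n} {g : GL (Fin n) ℚ_[p]}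
    (hg : ∀ i : Fin F.r, ∀ v ∈ F.V i.succ, g.val.mulVec v - v ∈ F.V i.castSucc)
    (i : Fin F.r) : ∀ v ∈ F.V i.succ, g.val.mulVec v ∈ F.V i.succ := by
  intro v hv
  have h1 : g.val.mulVec v - v ∈ F.V i.castSucc := hg i v hv
  have h2 : F.V i.castSucc ≤ F.V i.succ := le_of_lt (F.strictMono Fin.castSucc_lt_succ)
  have := (F.V i.succ).add_mem (h2 h1) hv
  simpa using this

/-- The unipotent radical of a proper flag:
`N = {g ∈ GL_n(ℚ_p) : (g - 1) V_i ⊆ V_{i-1} for all 1 ≤ i ≤ r}`. -/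
def N (F : ProperFlag p n) : Subgroup (GL (Fin n) ℚ_[p]) where
  carrier := {g | ∀ i : Fin F.r, ∀ v ∈ F.V i.succ, g.val.mulVec v - v ∈ F.V i.castSucc}
  one_mem' := by
    intro i v hv
    simp only [Units.val_one, Matrix.one_mulVec, sub_self]
    exact (F.V i.castSucc).zero_mem
  mul_mem' := by
    intro g h hg hh i v hv
    have hw : h.val.mulVec v ∈ F.V i.succ := mapsTo_of_mem hh i v hv
    have h1 : g.val.mulVec (h.val.mulVec v) - h.val.mulVec v ∈ F.V i.castSucc := hg i _ hw
    have h2 : h.val.mulVec v - v ∈ F.V i.castSucc := hh i v hv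
    have := (F.V i.castSucc).add_mem h1 h2
    simpa [Matrix.mulVec_mulVec, Units.val_mul, sub_add_sub_cancel] using this
  inv_mem' := by
    intro g hg i v hv
    -- the restriction of `g` to `F.V i.succ` is a bijection since it is injective
    set W := F.V i.succ with hW
    have hmap : ∀ w ∈ W, g.val.mulVec w ∈ W := mapsTo_of_mem hg i
    let φ : W →ₗ[ℚ_[p]] W := (g.val.mulVecLin).restrict (by
      intro w hw; simpa using hmap w hw)
    have hinj : Function.Injective φ := by
      intro a b hab
      have : g.val.mulVec a.1 = g.val.mulVec b.1 := congrArg Subtype.val hab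
      have h2 : (g⁻¹).val.mulVec (g.val.mulVec a.1) = (g⁻¹).val.mulVec (g.val.mulVec b.1) := by
        rw [this]
      rw [Matrix.mulVec_mulVec, Matrix.mulVec_mulVec, ← Units.val_mul, inv_mul_cancel g,
        Units.val_one, Matrix.one_mulVec, Matrix.one_mulVec] at h2
      exact Subtype.ext h2
    have hsurj : Function.Surjective φ := (LinearMap.injective_iff_surjective).1 hinj
    obtain ⟨⟨w, hw⟩, hweq⟩ := hsurj ⟨v, hv⟩
    have heq : g.val.mulVec w = v := congrArg Subtype.val hweq
    have hginv : (g⁻¹).val.mulVec v = w := by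
      rw [← heq, Matrix.mulVec_mulVec, ← Units.val_mul, inv_mul_cancel g, Units.val_one,
        Matrix.one_mulVec]
    rw [hginv]
    have := (F.V i.castSucc).neg_mem (hg i w hw)
    simp only [neg_sub] at this
    simpa [heq] using this

/-- The nilpotent radical of a proper flag:
`𝔫 = {X ∈ M_n(ℚ_p) : X V_i ⊆ V_{i-1} for all 1 ≤ i ≤ r}`. -/
def nil (F : ProperFlag p n) : Submodule ℚ_[p] (Matrix (Fin n) (Fin n) ℚ_[p]) where
  carrier := {X | ∀ i : Fin F.r, ∀ v ∈ F.V i.succ, X.mulVec v ∈ F.V i.castSucc}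
  zero_mem' := by
    intro i v hv
    simp only [Matrix.zero_mulVec]
    exact (F.V i.castSucc).zero_mem
  add_mem' := by
    intro X Y hX hY i v hv
    have := (F.V i.castSucc).add_mem (hX i v hv) (hY i v hv)
    simpa [Matrix.add_mulVec] using this
  smul_mem' := by
    intro c X hX i v hv
    have := (F.V i.castSucc).smul_mem c (hX i v hv)
    simpa [Matrix.smul_mulVec] using this

noncomputable instance (F : ProperFlag p n) : MeasurableSpace F.N := borel _
instance (F : ProperFlag p n) : BorelSpace F.N := ⟨rfl⟩
noncomputable instance (F : ProperFlag p n) : MeasurableSpace F.nil := borel _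
instance (F : ProperFlag p n) : BorelSpace F.nil := ⟨rfl⟩

end ProperFlag

open MeasureTheory

/-- A cusp form on the Lie algebra `M_n(ℚ_p)`: a locally constant compactly supported
function whose integrals over the nilpotent radical of every proper flag vanish. -/
def IsLieCuspForm (φ : Matrix (Fin n) (Fin n) ℚ_[p] → ℂ) : Prop :=
  IsLocallyConstant φ ∧ HasCompactSupport φ ∧
    ∀ (F : ProperFlag p n) (μ : Measure F.nil), μ.IsAddHaarMeasure →
      ∀ X : Matrix (Fin n) (Fin n) ℚ_[p],
        ∫ U : F.nil, φ (X + (U : Matrix (Fin n) (Fin n) ℚ_[p])) ∂μ = 0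

noncomputable instance : MeasurableSpace (Matrix (Fin n) (Fin n) ℚ_[p]) := borel _
instance : BorelSpace (Matrix (Fin n) (Fin n) ℚ_[p]) := ⟨rfl⟩

section Aux

lemma norm_exp_mul_I_sub_one (t : ℝ) :
    ‖Complex.exp (t * Complex.I) - 1‖ ^ 2 = 2 - 2 * Real.cos t := by
  rw [Complex.exp_mul_I]
  have : Complex.cos t + Complex.sin t * Complex.I - 1
      = Complex.ofReal (Real.cos t - 1) + Complex.ofReal (Real.sin t) * Complex.I := by
    push_cast; ring
  rw [this, Complex.sq_norm, Complex.normSq_add_mul_I]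
  nlinarith [Real.sin_sq_add_cos_sq t]

lemma eq_one_of_zpow_close (z : ℂ) (h : ∀ n : ℤ, ‖z ^ n - 1‖ < 1/2) : z = 1 := by
  have hz0 : z ≠ 0 := by
    intro rfl0
    have := h 1
    simp [rfl0] at this
    norm_num at this
  have hnorm : ∀ n : ℤ, ‖z‖ ^ n < (3:ℝ)/2 := by
    intro n
    have h1 : ‖z ^ n‖ - ‖(1:ℂ)‖ ≤ ‖z ^ n - 1‖ := norm_sub_norm_le _ _
    have := h n
    rw [norm_zpow] at h1
    simp only [norm_one] at h1
    linarith
  have habs : ‖z‖ = 1 := by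
    by_contra hne
    rcases lt_or_gt_of_ne hne with hlt | hgt
    · have hpos : 0 < ‖z‖ := norm_pos_iff.2 hz0
      have h1 : 1 < ‖z‖⁻¹ := (one_lt_inv₀ hpos).2 hlt
      obtain ⟨n, hn⟩ := pow_unbounded_of_one_lt ((3:ℝ)/2) h1
      have := hnorm (-(n:ℤ))
      rw [_root_.zpow_neg, _root_.zpow_natCast, ← inv_pow] at this
      linarith
    · obtain ⟨n, hn⟩ := pow_unbounded_of_one_lt ((3:ℝ)/2) hgt
      have := hnorm (n:ℤ)
      rw [_root_.zpow_natCast] at this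
      linarith
  set θ := Complex.arg z with hθ
  have hz : z = Complex.exp (θ * Complex.I) := by
    have := Complex.norm_mul_exp_arg_mul_I z
    rw [show ‖z‖ = 1 by rw [habs]] at this
    rw [← this]; simp [hθ]
  have hcos : ∀ n : ℤ, Real.cos (n * θ) > 7/8 := by
    intro n
    have hzn : z ^ n = Complex.exp ((((n : ℝ) * θ : ℝ) : ℂ) * Complex.I) := by
      rw [hz, ← Complex.exp_int_mul]
      congr 1
      push_cast; ring
    have hlt := h n
    rw [hzn] at hlt
    have hsq := norm_exp_mul_I_sub_one ((n : ℝ) * θ)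
    have hnn : (0:ℝ) ≤ ‖Complex.exp ((((n : ℝ) * θ : ℝ) : ℂ) * Complex.I) - 1‖ := norm_nonneg _
    nlinarith
  -- now show θ = 0
  have hθ0 : θ = 0 := by
    by_contra hne
    set θ' := |θ| with hθ'
    have hθ'pos : 0 < θ' := abs_pos.2 hne
    have hcos' : ∀ n : ℕ, Real.cos (n * θ') > 7/8 := by
      intro n
      rcases abs_cases θ with ⟨he, _⟩ | ⟨he, _⟩
      · rw [hθ', he]; exact_mod_cast hcos n
      · rw [hθ', he, mul_neg, Real.cos_neg]; exact_mod_cast hcos n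
    have hπ := Real.pi_pos
    have hθ'lt : θ' < Real.pi / 3 := by
      by_contra hge
      push_neg at hge
      have hle : θ' ≤ Real.pi := by
        have := Complex.abs_arg_le_pi z
        rw [hθ']; exact this
      have : Real.cos θ' ≤ Real.cos (Real.pi / 3) :=
        Real.cos_le_cos_of_nonneg_of_le_pi (by linarith) hle hge
      rw [Real.cos_pi_div_three] at this
      have := hcos' 1
      push_cast at this
      rw [one_mul] at this
      linarith
    set m : ℕ := ⌈(Real.pi / 3) / θ'⌉₊ with hm
    have h1 : Real.pi / 3 ≤ (m : ℝ) * θ' := by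
      have := Nat.le_ceil ((Real.pi / 3) / θ')
      calc Real.pi / 3 = ((Real.pi / 3) / θ') * θ' := by field_simp
        _ ≤ (m : ℝ) * θ' := by
          apply mul_le_mul_of_nonneg_right this (le_of_lt hθ'pos)
    have h2 : (m : ℝ) * θ' < Real.pi / 3 + θ' := by
      have hc : (m : ℝ) < (Real.pi / 3) / θ' + 1 :=
        Nat.ceil_lt_add_one (by positivity)
      calc (m : ℝ) * θ' < ((Real.pi / 3) / θ' + 1) * θ' := by
            apply mul_lt_mul_of_pos_right hc hθ'pos
        _ = Real.pi / 3 + θ' := by field_simp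
    have hb : Real.cos ((m : ℝ) * θ') ≤ Real.cos (Real.pi / 3) :=
      Real.cos_le_cos_of_nonneg_of_le_pi (by linarith) (by linarith) h1
    rw [Real.cos_pi_div_three] at hb
    have := hcos' m
    linarith
  rw [hz, hθ0]
  simp

-- helper: zpow bounds for (p:ℝ)
lemma exists_p_zpow_lt {ε : ℝ} (hε : 0 < ε) : ∃ k : ℤ, ((p:ℝ)) ^ k < ε := by
  have hp1 : (1:ℝ) < (p:ℝ) := by exact_mod_cast (Fact.out : p.Prime).one_lt
  obtain ⟨m, hm⟩ := pow_unbounded_of_one_lt ε⁻¹ hp1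
  refine ⟨-(m:ℤ), ?_⟩
  rw [_root_.zpow_neg, _root_.zpow_natCast]
  rw [inv_lt_comm₀ (by positivity) hε]
  exact hm

lemma exists_p_zpow_ge (r : ℝ) : ∃ k : ℤ, r ≤ ((p:ℝ)) ^ k := by
  have hp1 : (1:ℝ) < (p:ℝ) := by exact_mod_cast (Fact.out : p.Prime).one_lt
  obtain ⟨m, hm⟩ := pow_unbounded_of_one_lt r hp1
  exact ⟨(m:ℤ), by rw [_root_.zpow_natCast]; exact le_of_lt hm⟩

lemma psi_zsmul_norm_le (x : ℚ_[p]) (n : ℤ) : ‖n • x‖ ≤ ‖x‖ := by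
  rw [zsmul_eq_mul]
  have : ((n : ℚ_[p])) = ((n : ℤ) : ℚ_[p]) := by norm_cast
  rw [norm_mul]
  calc ‖(n : ℚ_[p])‖ * ‖x‖ ≤ 1 * ‖x‖ := by
        apply mul_le_mul_of_nonneg_right _ (norm_nonneg x)
        exact_mod_cast Padic.norm_int_le_one n
    _ = ‖x‖ := one_mul _

theorem psi_eq_one_of_small (ψ : AddChar ℚ_[p] ℂ) (hψcont : Continuous ψ) :
    ∃ k : ℤ, ∀ x : ℚ_[p], ‖x‖ ≤ ((p:ℝ)) ^ k → ψ x = 1 := by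
  have h0 : ψ 0 = 1 := ψ.map_zero_eq_one
  have hc : ContinuousAt ψ 0 := hψcont.continuousAt
  rw [Metric.continuousAt_iff] at hc
  obtain ⟨δ, hδ, hball⟩ := hc (1/2) (by norm_num)
  obtain ⟨k, hk⟩ := exists_p_zpow_lt (p := p) hδ
  refine ⟨k, fun x hx => ?_⟩
  apply eq_one_of_zpow_close
  intro m
  rw [← AddChar.map_zsmul_eq_zpow]
  have h1 : ‖m • x‖ < δ := lt_of_le_of_lt (le_trans (psi_zsmul_norm_le x m) hx) hk
  have := hball (x := m • x) (by simpa [dist_eq_norm] using h1)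
  rw [h0, dist_eq_norm] at this
  simpa using this

theorem psi_norm_one (ψ : AddChar ℚ_[p] ℂ) (hψcont : Continuous ψ) (x : ℚ_[p]) :
    ‖ψ x‖ = 1 := by
  have hK : IsCompact (Metric.closedBall (0:ℚ_[p]) ‖x‖) := isCompact_closedBall _ _
  obtain ⟨C, hC⟩ := hK.exists_bound_of_continuousOn hψcont.continuousOn
  have hmem : ∀ n : ℤ, n • x ∈ Metric.closedBall (0:ℚ_[p]) ‖x‖ := by
    intro n
    rw [Metric.mem_closedBall, dist_zero_right]
    exact psi_zsmul_norm_le x n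
  have hpow : ∀ n : ℤ, ‖ψ x‖ ^ n ≤ C := by
    intro n
    have := hC (n • x) (hmem n)
    rwa [AddChar.map_zsmul_eq_zpow, norm_zpow] at this
  have hne : ψ x ≠ 0 := by
    intro h0
    have h1 : ψ x * ψ (-x) = 1 := by
      rw [← AddChar.map_add_eq_mul, add_neg_cancel, ψ.map_zero_eq_one]
    rw [h0, zero_mul] at h1
    exact zero_ne_one h1
  have hpos : 0 < ‖ψ x‖ := norm_pos_iff.2 hne
  by_contra hne1
  rcases lt_or_gt_of_ne hne1 with hlt | hgt
  · have h1 : 1 < ‖ψ x‖⁻¹ := (one_lt_inv₀ hpos).2 hlt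
    obtain ⟨m, hm⟩ := pow_unbounded_of_one_lt C h1
    have := hpow (-(m:ℤ))
    rw [_root_.zpow_neg, _root_.zpow_natCast, ← inv_pow] at this
    linarith
  · obtain ⟨m, hm⟩ := pow_unbounded_of_one_lt C hgt
    have := hpow (m:ℤ)
    rw [_root_.zpow_natCast] at this
    linarith

section MatrixSetup

attribute [local instance] Matrix.normedAddCommGroup


local notation "E" => Matrix (Fin n) (Fin n) ℚ_[p]

lemma mat_norm_add_le (a b : E) : ‖a + b‖ ≤ max ‖a‖ ‖b‖ := by
  have h0 : (0:ℝ) ≤ max ‖a‖ ‖b‖ := le_max_of_le_left (norm_nonneg a)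
  refine (Matrix.norm_le_iff h0).2 fun i j => ?_
  have : (a + b) i j = a i j + b i j := rfl
  rw [this]
  refine le_trans (Padic.nonarchimedean _ _) ?_
  exact max_le_max (Matrix.norm_entry_le_entrywise_sup_norm a)
    (Matrix.norm_entry_le_entrywise_sup_norm b)

lemma matUltra : IsUltrametricDist E :=
  IsUltrametricDist.isUltrametricDist_of_forall_norm_add_le_max_norm mat_norm_add_le

lemma mat_properSpace : ProperSpace E :=
  inferInstanceAs (ProperSpace (Fin n → Fin n → ℚ_[p]))

lemma mat_secondCountable : SecondCountableTopology E :=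
  inferInstanceAs (SecondCountableTopology (Fin n → Fin n → ℚ_[p]))

lemma isOpen_matBall (x : E) (k : ℤ) : IsOpen (Metric.closedBall x ((p:ℝ)^k)) := by
  haveI := matUltra (p := p) (n := n)
  have hp0 : (0:ℝ) < (p:ℝ)^k := by
    have : (0:ℝ) < (p:ℝ) := by exact_mod_cast (Fact.out : p.Prime).pos
    positivity
  exact IsUltrametricDist.isOpen_closedBall x (ne_of_gt hp0)

/-- Uniform local constancy of a locally constant compactly supported function. -/
theorem unif_lc (φ : E → ℂ) (hlc : IsLocallyConstant φ) (hcs : HasCompactSupport φ) :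
    ∃ k : ℤ, ∀ (x a : E), ‖a‖ ≤ (p:ℝ)^k → φ (x + a) = φ x := by
  haveI := matUltra (p := p) (n := n)
  have hp1 : (1:ℝ) < (p:ℝ) := by exact_mod_cast (Fact.out : p.Prime).one_lt
  set K := tsupport φ with hK
  have hball : ∀ x : K, ∃ k : ℤ, ∀ y ∈ Metric.closedBall (x:E) ((p:ℝ)^k), φ y = φ (x:E) := by
    intro x
    have hopen : IsOpen {y : E | φ y = φ (x:E)} := hlc.isOpen_fiber _
    replace hopen := Metric.isOpen_iff.1 hopen
    obtain ⟨ε, hε, hb⟩ := hopen (x:E) rfl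
    obtain ⟨k, hk⟩ := exists_p_zpow_lt (p := p) hε
    refine ⟨k, fun y hy => ?_⟩
    exact hb (lt_of_le_of_lt (Metric.mem_closedBall.1 hy) hk)
  choose kk hkk using hball
  have hcov : K ⊆ ⋃ x : K, Metric.closedBall (x:E) ((p:ℝ)^(kk x)) := by
    intro x hx
    exact Set.mem_iUnion.2 ⟨⟨x, hx⟩, Metric.mem_closedBall_self (by positivity)⟩
  obtain ⟨t, ht⟩ := hcs.elim_finite_subcover
    (fun x : K => Metric.closedBall (x:E) ((p:ℝ)^(kk x))) (fun x => isOpen_matBall _ _) hcov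
  rcases t.eq_empty_or_nonempty with rfl | hne
  · refine ⟨0, fun x a _ => ?_⟩
    simp only [Finset.notMem_empty, Set.iUnion_of_empty, Set.iUnion_empty] at ht
    have h1 : φ x = 0 := image_eq_zero_of_notMem_tsupport (fun h => ht h)
    have h2 : φ (x + a) = 0 := image_eq_zero_of_notMem_tsupport (fun h => ht h)
    rw [h1, h2]
  · set k := t.inf' hne kk with hkdef
    refine ⟨k, fun x a ha => ?_⟩
    have hmono : ∀ z ∈ t, ((p:ℝ))^k ≤ (p:ℝ)^(kk z) := by
      intro z hz
      exact _root_.zpow_le_zpow_right₀ (le_of_lt hp1) (Finset.inf'_le kk hz)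
    by_cases hx : ∃ z ∈ t, x ∈ Metric.closedBall (z:E) ((p:ℝ)^(kk z))
    · obtain ⟨z, hz, hxz⟩ := hx
      rw [Metric.mem_closedBall, dist_eq_norm] at hxz
      have hxa : x + a ∈ Metric.closedBall (z:E) ((p:ℝ)^(kk z)) := by
        rw [Metric.mem_closedBall, dist_eq_norm]
        have : x + a - (z:E) = (x - (z:E)) + a := by abel
        rw [this]
        refine le_trans (mat_norm_add_le _ _) (max_le hxz (le_trans ha (hmono z hz)))
      rw [hkk z _ hxa, ← hkk z x (by rw [Metric.mem_closedBall, dist_eq_norm]; exact hxz)]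
    · push_neg at hx
      have hxK : x ∉ K := by
        intro hmem
        obtain ⟨z, hz1, hz2⟩ := Set.mem_iUnion₂.1 (ht hmem)
        exact hx z hz1 hz2
      have hxaK : x + a ∉ K := by
        intro hmem
        obtain ⟨z, hz1, hz2⟩ := Set.mem_iUnion₂.1 (ht hmem)
        rw [Metric.mem_closedBall, dist_eq_norm] at hz2
        refine hx z hz1 ?_
        rw [Metric.mem_closedBall, dist_eq_norm]
        have : x - (z:E) = (x + a - (z:E)) + (-a) := by abel
        rw [this]
        refine le_trans (mat_norm_add_le _ _) (max_le hz2 ?_)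
        rw [norm_neg]
        exact le_trans ha (hmono z hz1)
      rw [image_eq_zero_of_notMem_tsupport hxK, image_eq_zero_of_notMem_tsupport hxaK]

end MatrixSetup

section Fhat

attribute [local instance] Matrix.normedAddCommGroup

open MeasureTheory


local notation "E" => Matrix (Fin n) (Fin n) ℚ_[p]


lemma trace_stdBasisMatrix_mul (j i : Fin n) (c : ℚ_[p]) (Y : E) :
    (Matrix.single j i c * Y).trace = c * Y i j := by
  rw [Matrix.trace]
  rw [Finset.sum_eq_single j]
  · simp [Matrix.diag]
  · intro b _ hb
    rw [Matrix.diag]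
    exact Matrix.single_mul_apply_of_ne c j i b b hb Y
  · intro h
    exact absurd (Finset.mem_univ j) h

lemma norm_stdBasisMatrix_le (j i : Fin n) (t : ℚ_[p]) {r : ℝ} (hr : 0 ≤ r) (ht : ‖t‖ ≤ r) :
    ‖(Matrix.single j i t : E)‖ ≤ r := by
  refine (Matrix.norm_le_iff hr).2 fun u v => ?_
  by_cases h : u = j ∧ v = i
  · obtain ⟨rfl, rfl⟩ := h
    simpa [Matrix.single] using ht
  · have : Matrix.single j i t u v = 0 := by
      simp only [Matrix.single, Matrix.of_apply]
      rw [if_neg]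
      intro hc
      exact h ⟨hc.1.symm, hc.2.symm⟩
    rw [this]
    simpa using hr

variable (ψ : AddChar ℚ_[p] ℂ) (hψcont : Continuous ψ)
  (μ : Measure (Matrix (Fin n) (Fin n) ℚ_[p])) [μ.IsAddHaarMeasure]
  (φ : Matrix (Fin n) (Fin n) ℚ_[p] → ℂ) (hφlc : IsLocallyConstant φ) (hφsupp : HasCompactSupport φ)

include hψcont hφlc hφsupp in
lemma integrable_g (Y : E) : Integrable (fun Z => φ Z * ψ ((Z * Y).trace)) μ := by
  haveI := mat_secondCountable (p := p) (n := n)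
  have hcont : Continuous fun Z : E => φ Z * ψ ((Z * Y).trace) := by
    refine (hφlc.continuous).mul (hψcont.comp ?_)
    exact (continuous_id.matrix_mul continuous_const).matrix_trace
  have hcs : HasCompactSupport fun Z : E => φ Z * ψ ((Z * Y).trace) :=
    hφsupp.mul_right
  exact hcont.integrable_of_hasCompactSupport hcs

lemma trace_small (k0 N m : ℤ) (hm : N + m = k0) (Z W : E)
    (hZ : ‖Z‖ ≤ (p:ℝ)^N) (hW : ‖W‖ ≤ (p:ℝ)^m) : ‖(Z * W).trace‖ ≤ (p:ℝ)^k0 := by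
  have hp0 : (0:ℝ) < (p:ℝ) := by exact_mod_cast (Fact.out : p.Prime).pos
  have hk0 : (0:ℝ) ≤ (p:ℝ)^k0 := by positivity
  rw [Matrix.trace]
  refine IsUltrametricDist.norm_sum_le_of_forall_le_of_nonneg hk0 fun i _ => ?_
  rw [Matrix.diag, Matrix.mul_apply]
  refine IsUltrametricDist.norm_sum_le_of_forall_le_of_nonneg hk0 fun j _ => ?_
  rw [norm_mul]
  calc ‖Z i j‖ * ‖W j i‖ ≤ (p:ℝ)^N * (p:ℝ)^m := by
        refine mul_le_mul (le_trans (Matrix.norm_entry_le_entrywise_sup_norm Z) hZ)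
          (le_trans (Matrix.norm_entry_le_entrywise_sup_norm W) hW) (norm_nonneg _) (by positivity)
    _ = (p:ℝ)^k0 := by rw [← _root_.zpow_add₀ (ne_of_gt hp0), hm]

include hψcont hφsupp in
theorem fhat_lc : IsLocallyConstant (fun Y : E => ∫ Z, φ Z * ψ ((Z * Y).trace) ∂μ) := by
  haveI := mat_properSpace (p := p) (n := n)
  have hp0 : (0:ℝ) < (p:ℝ) := by exact_mod_cast (Fact.out : p.Prime).pos
  obtain ⟨k0, hk0⟩ := psi_eq_one_of_small ψ hψcont
  obtain ⟨r, hr⟩ := hφsupp.isBounded.subset_closedBall 0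
  obtain ⟨N, hN⟩ := exists_p_zpow_ge (p := p) r
  have hsuppN : tsupport φ ⊆ Metric.closedBall 0 ((p:ℝ)^N) :=
    subset_trans hr (Metric.closedBall_subset_closedBall hN)
  set m := k0 - N with hm
  rw [IsLocallyConstant.iff_exists_open]
  intro Y
  refine ⟨Metric.ball Y ((p:ℝ)^m), Metric.isOpen_ball, Metric.mem_ball_self (by positivity), ?_⟩
  intro Y' hY'
  have hW : ‖Y' - Y‖ ≤ (p:ℝ)^m := le_of_lt (by rwa [Metric.mem_ball, dist_eq_norm] at hY')
  have key : ∀ Z : E, φ Z * ψ ((Z * Y').trace) = φ Z * ψ ((Z * Y).trace) := by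
    intro Z
    by_cases hZ : φ Z = 0
    · rw [hZ, zero_mul, zero_mul]
    · have hZmem : Z ∈ tsupport φ := subset_tsupport _ hZ
      have hZN : ‖Z‖ ≤ (p:ℝ)^N := by
        have := hsuppN hZmem
        rwa [Metric.mem_closedBall, dist_zero_right] at this
      have hdec : Y' = Y + (Y' - Y) := by abel
      rw [hdec, Matrix.mul_add, Matrix.trace_add, AddChar.map_add_eq_mul]
      rw [hk0 _ (trace_small k0 N m (by omega) Z (Y' - Y) hZN hW), mul_one]
  rw [integral_congr_ae (Filter.Eventually.of_forall key)]

include hψcont hφlc hφsupp in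
theorem fhat_cs (hψnt : ψ ≠ 1) :
    HasCompactSupport (fun Y : E => ∫ Z, φ Z * ψ ((Z * Y).trace) ∂μ) := by
  haveI := mat_properSpace (p := p) (n := n)
  haveI := mat_secondCountable (p := p) (n := n)
  have hp0 : (0:ℝ) < (p:ℝ) := by exact_mod_cast (Fact.out : p.Prime).pos
  obtain ⟨k, hk⟩ := unif_lc φ hφlc hφsupp
  obtain ⟨c, hc⟩ := AddChar.ne_one_iff.1 hψnt
  obtain ⟨M, hM⟩ := exists_p_zpow_ge (p := p) (‖c‖ * (p:ℝ)^(-k))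
  refine HasCompactSupport.intro (isCompact_closedBall (0:E) ((p:ℝ)^M)) ?_
  intro Y hY
  rw [Metric.mem_closedBall, dist_zero_right] at hY
  -- find a big entry
  have : ¬ ∀ i j, ‖Y i j‖ ≤ (p:ℝ)^M := fun h => hY ((Matrix.norm_le_iff (by positivity)).2 h)
  push_neg at this
  obtain ⟨i, j, hij⟩ := this
  have hYij : Y i j ≠ 0 := by
    intro h0
    rw [h0] at hij
    simp at hij
    exact absurd hij (not_lt.2 (by positivity))
  set t : ℚ_[p] := c / Y i j with htdef
  set a : E := Matrix.single j i t with hadef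
  have hta : ‖a‖ ≤ (p:ℝ)^k := by
    refine norm_stdBasisMatrix_le j i t (by positivity) ?_
    rw [htdef, norm_div]
    rw [div_le_iff₀ (by simpa using hYij)]
    calc ‖c‖ = (‖c‖ * (p:ℝ)^(-k)) * (p:ℝ)^k := by
          rw [mul_assoc, ← _root_.zpow_add₀ (ne_of_gt hp0)]
          simp
      _ ≤ (p:ℝ)^M * (p:ℝ)^k := by
          refine mul_le_mul_of_nonneg_right hM (by positivity)
      _ ≤ ‖Y i j‖ * (p:ℝ)^k := by
          refine mul_le_mul_of_nonneg_right (le_of_lt hij) (by positivity)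
      _ = (p:ℝ)^k * ‖Y i j‖ := by ring
  have htr : ((a : E) * Y).trace = c := by
    rw [hadef, trace_stdBasisMatrix_mul, htdef, div_mul_cancel₀ _ hYij]
  -- substitution
  have hsub : ∫ Z, φ (Z + a) * ψ (((Z + a) * Y).trace) ∂μ
      = ∫ Z, φ Z * ψ ((Z * Y).trace) ∂μ :=
    integral_add_right_eq_self (fun Z : E => φ Z * ψ ((Z * Y).trace)) a
  have hrw : ∀ Z : E, φ (Z + a) * ψ (((Z + a) * Y).trace)
      = (φ Z * ψ ((Z * Y).trace)) * ψ c := by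
    intro Z
    rw [hk Z a hta, Matrix.add_mul, Matrix.trace_add, AddChar.map_add_eq_mul, htr]
    ring
  rw [integral_congr_ae (Filter.Eventually.of_forall hrw), integral_mul_const] at hsub
  by_contra hne
  have hz : (∫ Z, φ Z * ψ ((Z * Y).trace) ∂μ) * (ψ c - 1) = 0 := by
    rw [mul_sub, hsub, mul_one, sub_self]
  rcases mul_eq_zero.1 hz with h | h
  · exact hne h
  · exact hc (by linear_combination h)

end Fhat


section LinAlg

lemma sum_mulVec {ι : Type*} (s : Finset ι) (f : ι → Matrix (Fin n) (Fin n) ℚ_[p])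
    (v : Fin n → ℚ_[p]) :
    (∑ i ∈ s, f i).mulVec v = ∑ i ∈ s, (f i).mulVec v := by
  classical
  induction s using Finset.induction_on with
  | empty => simp [Matrix.zero_mulVec]
  | insert x s hx ih =>
    rw [Finset.sum_insert hx, Finset.sum_insert hx, Matrix.add_mulVec, ih]

lemma dual_expand (f : (Fin n → ℚ_[p]) →ₗ[ℚ_[p]] ℚ_[p]) (x : Fin n → ℚ_[p]) :
    f x = ∑ a, x a * f (Pi.single a 1) := by
  conv_lhs => rw [← Finset.univ_sum_single x]
  rw [_root_.map_sum]
  congr 1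
  funext a
  have : Pi.single a (x a) = x a • (Pi.single a 1 : Fin n → ℚ_[p]) := by
    rw [← Pi.single_smul, smul_eq_mul, mul_one]
  rw [this, _root_.map_smul, smul_eq_mul]

/-- A matrix with irreducible characteristic polynomial has no nontrivial invariant
subspace. -/
lemma exists_not_invariant (Z : Matrix (Fin n) (Fin n) ℚ_[p]) (hirr : Irreducible Z.charpoly)
    (W : Submodule ℚ_[p] (Fin n → ℚ_[p])) (hbot : W ≠ ⊥) (htop : W ≠ ⊤) :
    ∃ w ∈ W, Z.mulVec w ∉ W := by
  classical
  by_contra hcon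
  push_neg at hcon
  obtain ⟨v, hvW, hv0⟩ := Submodule.exists_mem_ne_zero_of_ne_bot hbot
  have hbW : ∀ k : ℕ, (Z ^ k).mulVec v ∈ W := by
    intro k
    induction k with
    | zero => simpa [Matrix.one_mulVec] using hvW
    | succ k ih =>
      have : Z ^ (k+1) = Z * Z ^ k := by rw [pow_succ']
      rw [this, ← Matrix.mulVec_mulVec]
      exact hcon _ ih
  set b : Fin n → (Fin n → ℚ_[p]) := fun k => (Z ^ (k:ℕ)).mulVec v with hb
  have hli : LinearIndependent ℚ_[p] b := by
    by_contra hnl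
    obtain ⟨g, hgsum, k0, hk0⟩ := Fintype.not_linearIndependent_iff.1 hnl
    set q : Polynomial ℚ_[p] := ∑ k : Fin n, Polynomial.C (g k) * Polynomial.X ^ (k:ℕ) with hq
    have hq0 : q ≠ 0 := by
      intro h0
      have : q.coeff (k0:ℕ) = g k0 := by
        rw [hq, Polynomial.finset_sum_coeff]
        rw [Finset.sum_eq_single k0]
        · rw [Polynomial.coeff_C_mul_X_pow, if_pos rfl]
        · intro k _ hk
          rw [Polynomial.coeff_C_mul_X_pow, if_neg]
          intro heq
          exact hk (Fin.ext heq.symm)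
        · intro hmem
          exact absurd (Finset.mem_univ k0) hmem
      rw [h0, Polynomial.coeff_zero] at this
      exact hk0 this.symm
    have hdeg : q.degree < (n : ℕ) := by
      rw [hq]
      refine lt_of_le_of_lt (Polynomial.degree_sum_le _ _) ?_
      rw [Finset.sup_lt_iff (by exact_mod_cast WithBot.bot_lt_coe n)]
      intro k _
      refine lt_of_le_of_lt (Polynomial.degree_C_mul_X_pow_le _ _) ?_
      exact_mod_cast WithBot.coe_lt_coe.2 k.isLt
    have haq : (Polynomial.aeval Z q).mulVec v = 0 := by
      rw [hq, _root_.map_sum, _root_.sum_mulVec]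
      have : ∀ k : Fin n, (Polynomial.aeval Z (Polynomial.C (g k) * Polynomial.X ^ (k:ℕ))).mulVec v
          = g k • b k := by
        intro k
        rw [_root_.map_mul, Polynomial.aeval_C, _root_.map_pow, Polynomial.aeval_X, ← Algebra.smul_def,
          Matrix.smul_mulVec]
      simp only [this]
      exact hgsum
    have hndvd : ¬ Z.charpoly ∣ q := by
      intro hdvd
      have h1 : Z.charpoly.natDegree ≤ q.natDegree := Polynomial.natDegree_le_of_dvd hdvd hq0
      have h2 : q.natDegree < n := (Polynomial.natDegree_lt_iff_degree_lt hq0).2 hdeg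
      rw [Matrix.charpoly_natDegree_eq_dim, Fintype.card_fin] at h1
      omega
    obtain ⟨A, B, hAB⟩ := (hirr.coprime_iff_not_dvd.2 hndvd)
    have heval : (Polynomial.aeval Z B * Polynomial.aeval Z q : Matrix (Fin n) (Fin n) ℚ_[p])
        = 1 := by
      have := congrArg (Polynomial.aeval Z) hAB
      rw [_root_.map_add, _root_.map_mul, _root_.map_mul, Matrix.aeval_self_charpoly, mul_zero, zero_add,
        _root_.map_one] at this
      exact this
    have : v = 0 := by
      calc v = (1 : Matrix (Fin n) (Fin n) ℚ_[p]).mulVec v := (Matrix.one_mulVec v).symm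
        _ = (Polynomial.aeval Z B).mulVec ((Polynomial.aeval Z q).mulVec v) := by
            rw [Matrix.mulVec_mulVec, heval]
        _ = 0 := by rw [haq, Matrix.mulVec_zero]
    exact hv0 this
  have hmem : ∀ k : Fin n, b k ∈ W := fun k => hbW k
  set b' : Fin n → W := fun k => ⟨b k, hmem k⟩ with hb'
  have hli' : LinearIndependent ℚ_[p] b' := by
    apply LinearIndependent.of_comp W.subtype
    exact hli
  have hcard : n ≤ Module.finrank ℚ_[p] W := by
    have := hli'.fintype_card_le_finrank
    simpa using this
  have hlt : Module.finrank ℚ_[p] W < Module.finrank ℚ_[p] (Fin n → ℚ_[p]) :=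
    Submodule.finrank_lt htop
  rw [Module.finrank_fin_fun] at hlt
  omega

/-- For every matrix `Z` with irreducible charpoly and proper flag `F`, there is an element
of the nilpotent radical pairing nontrivially with `Z` under the trace form. -/
theorem exists_trace_one (F : ProperFlag p n) (Z : Matrix (Fin n) (Fin n) ℚ_[p])
    (hirr : Irreducible Z.charpoly) :
    ∃ U : Matrix (Fin n) (Fin n) ℚ_[p], U ∈ F.nil ∧ (Z * U).trace = 1 := by
  classical
  have hr := F.two_le_r
  set one : Fin (F.r + 1) := ⟨1, by omega⟩ with hone
  have h01 : (0 : Fin (F.r + 1)) < one := by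
    rw [Fin.lt_def]
    simp [hone]
  have h1last : one < Fin.last F.r := by
    rw [Fin.lt_def]
    simp [hone, Fin.last]
    omega
  have hbot : F.V one ≠ ⊥ := by
    rw [← F.zero_eq_bot]
    exact (F.strictMono h01).ne'
  have htop : F.V one ≠ ⊤ := by
    rw [← F.last_eq_top]
    exact (F.strictMono h1last).ne
  obtain ⟨w, hw, hZw⟩ := exists_not_invariant Z hirr (F.V one) hbot htop
  -- a linear functional vanishing on `F.V one` with value 1 at `Z.mulVec w`
  have hmk : (F.V one).mkQ (Z.mulVec w) ≠ 0 := by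
    rw [Submodule.mkQ_apply]
    intro h0
    exact hZw ((Submodule.Quotient.mk_eq_zero _).1 h0)
  obtain ⟨g, hg⟩ : ∃ g : Module.Dual ℚ_[p] ((Fin n → ℚ_[p]) ⧸ F.V one),
      g ((F.V one).mkQ (Z.mulVec w)) ≠ 0 := by
    by_contra hcon
    push_neg at hcon
    exact hmk ((Module.forall_dual_apply_eq_zero_iff ℚ_[p] _).1 hcon)
  set s := g ((F.V one).mkQ (Z.mulVec w)) with hs
  set f : (Fin n → ℚ_[p]) →ₗ[ℚ_[p]] ℚ_[p] := s⁻¹ • (g ∘ₗ (F.V one).mkQ) with hf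
  have hfW : ∀ u ∈ F.V one, f u = 0 := by
    intro u hu
    rw [hf]
    simp only [LinearMap.smul_apply, LinearMap.comp_apply, smul_eq_mul]
    rw [Submodule.mkQ_apply, (Submodule.Quotient.mk_eq_zero _).2 hu, _root_.map_zero, mul_zero]
  have hfZw : f (Z.mulVec w) = 1 := by
    rw [hf]
    simp only [LinearMap.smul_apply, LinearMap.comp_apply, smul_eq_mul]
    rw [← hs, inv_mul_cancel₀ hg]
  set U : Matrix (Fin n) (Fin n) ℚ_[p] :=
    Matrix.of (fun a b => w a * f (Pi.single b 1)) with hU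
  have hUmul : ∀ v, U.mulVec v = f v • w := by
    intro v
    funext a
    show (∑ b, U a b * v b) = (f v • w) a
    rw [Pi.smul_apply, smul_eq_mul, dual_expand f v, Finset.sum_mul]
    refine Finset.sum_congr rfl fun b _ => ?_
    show w a * f (Pi.single b 1) * v b = (v b * f (Pi.single b 1)) * w a
    ring
  have hUnil : U ∈ F.nil := by
    intro i v hv
    rw [hUmul]
    by_cases hi : (i : ℕ) = 0
    · have hisucc : i.succ = one := by
        apply Fin.ext
        simp [hone, Fin.val_succ, hi]
      rw [hisucc] at hv
      rw [hfW v hv, zero_smul]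
      exact Submodule.zero_mem _
    · have hle : one ≤ i.castSucc := by
        rw [Fin.le_def]
        simp only [hone, Fin.coe_castSucc]
        omega
      have hWle : F.V one ≤ F.V i.castSucc := F.strictMono.monotone hle
      exact Submodule.smul_mem _ _ (hWle hw)
  refine ⟨U, hUnil, ?_⟩
  have hdiag : ∀ a, (Z * U) a a = (Z.mulVec w) a * f (Pi.single a 1) := by
    intro a
    rw [Matrix.mul_apply]
    show (∑ b, Z a b * (w b * f (Pi.single a 1))) = (∑ b, Z a b * w b) * f (Pi.single a 1)
    rw [Finset.sum_mul]
    congr 1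
    funext b
    ring
  have : (Z * U).trace = ∑ a, (Z.mulVec w) a * f (Pi.single a 1) := by
    rw [Matrix.trace]
    congr 1
    funext a
    rw [Matrix.diag]
    exact hdiag a
  rw [this, ← dual_expand f (Z.mulVec w), hfZw]

end LinAlg

end Aux

attribute [local instance] Matrix.normedAddCommGroup

/-- If a locally constant compactly supported `φ : M_n(ℚ_p) → ℂ` is
supported in the set of matrices with irreducible characteristic polynomial, then its
Fourier transform `φ̂(Y) = ∫ φ(X) ψ(tr(XY)) dX` (with respect to the trace form and a
nontrivial continuous additive character `ψ`) is a Lie algebra cusp form. -/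
theorem fourier_of_elliptic_supported_is_lie_cusp_form
    (p : ℕ) [Fact p.Prime] (n : ℕ) (hn : 1 ≤ n)
    (ψ : AddChar ℚ_[p] ℂ) (hψcont : Continuous ψ) (hψnt : ψ ≠ 1)
    (μ : MeasureTheory.Measure (Matrix (Fin n) (Fin n) ℚ_[p])) [μ.IsAddHaarMeasure]
    (φ : Matrix (Fin n) (Fin n) ℚ_[p] → ℂ)
    (hφlc : IsLocallyConstant φ) (hφsupp : HasCompactSupport φ)
    (hsupp : Function.support φ ⊆
      {X : Matrix (Fin n) (Fin n) ℚ_[p] | Irreducible X.charpoly}) :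
    IsLieCuspForm (fun Y : Matrix (Fin n) (Fin n) ℚ_[p] =>
      ∫ X : Matrix (Fin n) (Fin n) ℚ_[p], φ X * ψ ((X * Y).trace) ∂μ) := by
  haveI := mat_properSpace (p := p) (n := n)
  haveI := mat_secondCountable (p := p) (n := n)
  haveI : LocallyCompactSpace (Matrix (Fin n) (Fin n) ℚ_[p]) := inferInstanceAs (LocallyCompactSpace (Fin n → Fin n → ℚ_[p]))
  haveI : SecondCountableTopology (Matrix (Fin n) (Fin n) ℚ_[p]) := inferInstanceAs (SecondCountableTopology (Fin n → Fin n → ℚ_[p]))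
  have hp0 : (0:ℝ) < (p:ℝ) := by exact_mod_cast (Fact.out : p.Prime).pos
  refine ⟨fhat_lc ψ hψcont μ φ hφsupp, fhat_cs ψ hψcont μ φ hφlc hφsupp hψnt, ?_⟩
  intro F ν hν X
  haveI := hν
  show (∫ U : ↥F.nil, (∫ Z, φ Z * ψ ((Z * (X + (U : Matrix (Fin n) (Fin n) ℚ_[p]))).trace) ∂μ) ∂ν) = 0
  set fhat : Matrix (Fin n) (Fin n) ℚ_[p] → ℂ :=
    fun Y => ∫ Z, φ Z * ψ ((Z * Y).trace) ∂μ with hfhat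
  -- the support of φ is closed
  have hsuppcl : IsClosed (Function.support φ) := by
    have h0 : IsOpen {x | φ x = 0} := hφlc.isOpen_fiber 0
    have heq : Function.support φ = {x | φ x = 0}ᶜ := by
      ext x; simp [Function.mem_support]
    rw [heq]; exact h0.isClosed_compl
  have htsupp : tsupport φ = Function.support φ := hsuppcl.closure_eq
  -- the nilpotent radical is closed
  have hnilcl : IsClosed ((F.nil : Set (Matrix (Fin n) (Fin n) ℚ_[p]))) := by
    have heq : (F.nil : Set (Matrix (Fin n) (Fin n) ℚ_[p]))
        = ⋂ (i : Fin F.r), ⋂ (v : ↥(F.V i.succ)),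
            {A : Matrix (Fin n) (Fin n) ℚ_[p] | A.mulVec ↑v ∈ F.V i.castSucc} := by
      ext A
      simp only [Set.mem_iInter, SetLike.mem_coe, Set.mem_setOf_eq]
      constructor
      · intro h i v; exact h i ↑v v.2
      · intro h i v hv; exact h i ⟨v, hv⟩
    rw [heq]
    refine isClosed_iInter fun i => isClosed_iInter fun v => ?_
    have hVc : IsClosed ((F.V i.castSucc : Set (Fin n → ℚ_[p]))) :=
      Submodule.closed_of_finiteDimensional _
    have hcont : Continuous fun A : Matrix (Fin n) (Fin n) ℚ_[p] => A.mulVec ↑v :=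
      continuous_id.matrix_mulVec continuous_const
    exact hVc.preimage hcont
  haveI : LocallyCompactSpace ↥(F.nil) := hnilcl.locallyCompactSpace
  haveI : SecondCountableTopology ↥(F.nil) :=
    TopologicalSpace.Subtype.secondCountableTopology (F.nil : Set (Matrix (Fin n) (Fin n) ℚ_[p]))
  -- compact support of the Fourier transform
  have hcs2 : HasCompactSupport fhat := fhat_cs ψ hψcont μ φ hφlc hφsupp hψnt
  obtain ⟨r, hr⟩ := hcs2.isBounded.subset_closedBall 0
  obtain ⟨c, hc⟩ := AddChar.ne_one_iff.1 hψnt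
  -- for each Z in the support, an element of the nilradical pairing nontrivially with Z
  set K := tsupport φ with hK
  have hKirr : ∀ z : K, Irreducible (Matrix.charpoly (z : Matrix (Fin n) (Fin n) ℚ_[p])) := by
    intro z
    have hz : (z : Matrix (Fin n) (Fin n) ℚ_[p]) ∈ Function.support φ := by
      rw [← htsupp]; exact z.2
    exact hsupp hz
  choose W hWnil hWtr using fun z : K =>
    exists_trace_one F (z : Matrix (Fin n) (Fin n) ℚ_[p]) (hKirr z)
  have hWne : ∀ z : K,
      ψ (((z : Matrix (Fin n) (Fin n) ℚ_[p]) * (c • W z)).trace) ≠ 1 := by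
    intro z
    rw [Matrix.mul_smul, Matrix.trace_smul, hWtr z, smul_eq_mul, mul_one]
    exact hc
  set O : K → Set (Matrix (Fin n) (Fin n) ℚ_[p]) :=
    fun z => {Y | ψ ((Y * (c • W z)).trace) ≠ 1} with hO
  have hOopen : ∀ z, IsOpen (O z) := by
    intro z
    have hcont : Continuous fun Y : Matrix (Fin n) (Fin n) ℚ_[p] =>
        ψ ((Y * (c • W z)).trace) :=
      hψcont.comp (continuous_id.matrix_mul continuous_const).matrix_trace
    have : O z = (fun Y : Matrix (Fin n) (Fin n) ℚ_[p] => ψ ((Y * (c • W z)).trace)) ⁻¹'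
        {w : ℂ | w ≠ 1} := rfl
    rw [this]
    exact (isOpen_ne).preimage hcont
  have hcover : K ⊆ ⋃ z : K, O z := fun x hx => Set.mem_iUnion.2 ⟨⟨x, hx⟩, hWne ⟨x, hx⟩⟩
  obtain ⟨t, ht⟩ := hφsupp.elim_finite_subcover O hOopen hcover
  -- choose the radius of the compact open subgroup L
  obtain ⟨k, hkk⟩ := exists_p_zpow_ge (p := p)
    (max (r + ‖X‖) (∑ z ∈ t, ‖(c • W z : Matrix (Fin n) (Fin n) ℚ_[p])‖))
  have hk1 : r + ‖X‖ ≤ (p:ℝ)^k := le_trans (le_max_left _ _) hkk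
  have hk2 : ∀ z ∈ t, ‖(c • W z : Matrix (Fin n) (Fin n) ℚ_[p])‖ ≤ (p:ℝ)^k := by
    intro z hz
    refine le_trans ?_ (le_trans (le_max_right _ _) hkk)
    exact Finset.single_le_sum (f := fun z : K => ‖(c • W z : Matrix (Fin n) (Fin n) ℚ_[p])‖)
      (fun i _ => norm_nonneg _) hz
  set L : Set ↥(F.nil) := {u | ‖(u : Matrix (Fin n) (Fin n) ℚ_[p])‖ ≤ (p:ℝ)^k} with hL
  have hLval : L = (Subtype.val) ⁻¹' (Metric.closedBall (0 : Matrix (Fin n) (Fin n) ℚ_[p]) ((p:ℝ)^k)) := by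
    ext u
    simp [hL, Metric.mem_closedBall, dist_zero_right]
  have hLmeas : MeasurableSet L := by
    rw [hLval]
    exact (show IsClosed (Subtype.val ⁻¹' Metric.closedBall (0 : Matrix (Fin n) (Fin n) ℚ_[p]) ((p:ℝ)^k) : Set ↥(F.nil)) from Metric.isClosed_closedBall.preimage continuous_subtype_val).measurableSet
  have hLcompact : IsCompact L := by
    rw [Subtype.isCompact_iff]
    have himg : Subtype.val '' L
        = (F.nil : Set (Matrix (Fin n) (Fin n) ℚ_[p]))
          ∩ Metric.closedBall 0 ((p:ℝ)^k) := by
      ext x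
      constructor
      · rintro ⟨u, hu, rfl⟩
        exact ⟨u.2, by simpa [hL, Metric.mem_closedBall, dist_zero_right] using hu⟩
      · rintro ⟨hx1, hx2⟩
        refine ⟨⟨x, hx1⟩, ?_, rfl⟩
        simpa [hL, Metric.mem_closedBall, dist_zero_right] using hx2
    rw [himg]
    exact (isCompact_closedBall _ _).inter_left hnilcl
  have hLfin : ν L < ⊤ := hLcompact.measure_lt_top
  -- vanishing of fhat (X + u) off L
  have hzero : ∀ u : ↥(F.nil), u ∉ L → fhat (X + (u : Matrix (Fin n) (Fin n) ℚ_[p])) = 0 := by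
    intro u hu
    by_contra hne
    have hmem : X + (u : Matrix (Fin n) (Fin n) ℚ_[p]) ∈ tsupport fhat := subset_tsupport _ hne
    have h1 : ‖X + (u : Matrix (Fin n) (Fin n) ℚ_[p])‖ ≤ r := by
      have := hr hmem
      rwa [Metric.mem_closedBall, dist_zero_right] at this
    refine hu ?_
    show ‖(u : Matrix (Fin n) (Fin n) ℚ_[p])‖ ≤ (p:ℝ)^k
    calc ‖(u : Matrix (Fin n) (Fin n) ℚ_[p])‖
        = ‖(X + (u : Matrix (Fin n) (Fin n) ℚ_[p])) - X‖ := by congr 1; abel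
      _ ≤ ‖X + (u : Matrix (Fin n) (Fin n) ℚ_[p])‖ + ‖X‖ := norm_sub_le _ _
      _ ≤ r + ‖X‖ := by linarith
      _ ≤ (p:ℝ)^k := hk1
  -- the two-variable kernel
  set G : ↥(F.nil) → Matrix (Fin n) (Fin n) ℚ_[p] → ℂ :=
    fun u Z => Set.indicator L (fun _ => (1:ℂ)) u
      * (φ Z * ψ ((Z * (X + (u : Matrix (Fin n) (Fin n) ℚ_[p]))).trace)) with hG
  have hφcont : Continuous φ := hφlc.continuous
  have hφint : MeasureTheory.Integrable φ μ :=
    hφcont.integrable_of_hasCompactSupport hφsupp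
  -- integrability of G on the product
  have hmeasG : MeasureTheory.AEStronglyMeasurable (Function.uncurry G) (ν.prod μ) := by
    have h1 : Measurable fun q : ↥(F.nil) × Matrix (Fin n) (Fin n) ℚ_[p] =>
        Set.indicator L (fun _ => (1:ℂ)) q.1 :=
      (measurable_const.indicator hLmeas).comp measurable_fst
    have h2 : Continuous fun q : ↥(F.nil) × Matrix (Fin n) (Fin n) ℚ_[p] =>
        φ q.2 * ψ ((q.2 * (X + ((q.1 : ↥(F.nil)) : Matrix (Fin n) (Fin n) ℚ_[p]))).trace) := by
      refine (hφcont.comp continuous_snd).mul (hψcont.comp ?_)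
      exact (continuous_snd.matrix_mul
        (continuous_const.add (continuous_subtype_val.comp continuous_fst))).matrix_trace
    exact h1.aestronglyMeasurable.mul h2.aestronglyMeasurable
  have hindint : MeasureTheory.Integrable (fun u => Set.indicator L (fun _ => (1:ℝ)) u) ν := by
    rw [MeasureTheory.integrable_indicator_iff hLmeas]
    exact MeasureTheory.integrableOn_const hLfin.ne
  have hInt : MeasureTheory.Integrable (Function.uncurry G) (ν.prod μ) := by
    refine MeasureTheory.Integrable.mono' (hindint.mul_prod hφint.norm) hmeasG
      (Filter.Eventually.of_forall fun q => ?_)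
    show ‖G q.1 q.2‖ ≤ Set.indicator L (fun _ => (1:ℝ)) q.1 * ‖φ q.2‖
    by_cases hq : q.1 ∈ L
    · rw [hG]
      simp only [Set.indicator_of_mem hq, one_mul, norm_mul]
      rw [psi_norm_one ψ hψcont, mul_one]
    · rw [hG]
      simp only [Set.indicator_of_notMem hq, zero_mul, norm_zero]
      positivity
  -- main computation
  have step1 : ∀ u : ↥(F.nil), fhat (X + (u : Matrix (Fin n) (Fin n) ℚ_[p]))
      = ∫ Z, G u Z ∂μ := by
    intro u
    by_cases hu : u ∈ L
    · rw [hG]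
      simp only [Set.indicator_of_mem hu, one_mul, hfhat]
    · rw [hzero u hu, hG]
      simp only [Set.indicator_of_notMem hu, zero_mul, MeasureTheory.integral_zero]
  have hinner : ∀ Z : Matrix (Fin n) (Fin n) ℚ_[p], (∫ u, G u Z ∂ν) = 0 := by
    intro Z
    by_cases hφZ : φ Z = 0
    · have hz : ∀ u, G u Z = 0 := by
        intro u
        rw [hG]
        simp [hφZ]
      simp only [hz, MeasureTheory.integral_zero]
    · have hZK : Z ∈ K := by
        have hZs : Z ∈ Function.support φ := hφZ
        rwa [← htsupp] at hZs
      obtain ⟨z, hzt, hzO⟩ := Set.mem_iUnion₂.1 (ht hZK)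
      set a : ↥(F.nil) := ⟨c • W z, Submodule.smul_mem _ _ (hWnil z)⟩ with ha
      have haL : a ∈ L := by
        show ‖(a : Matrix (Fin n) (Fin n) ℚ_[p])‖ ≤ (p:ℝ)^k
        exact hk2 z hzt
      have hψa : ψ ((Z * (a : Matrix (Fin n) (Fin n) ℚ_[p])).trace) ≠ 1 := hzO
      have htrans := MeasureTheory.integral_add_left_eq_self (μ := ν) (fun u => G u Z) a
      have hGa : ∀ u, G (a + u) Z
          = ψ ((Z * (a : Matrix (Fin n) (Fin n) ℚ_[p])).trace) * G u Z := by
        intro u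
        have hcoe : ((a + u : ↥(F.nil)) : Matrix (Fin n) (Fin n) ℚ_[p])
            = (a : Matrix (Fin n) (Fin n) ℚ_[p]) + (u : Matrix (Fin n) (Fin n) ℚ_[p]) := rfl
        have hindeq : Set.indicator L (fun _ => (1:ℂ)) (a + u)
            = Set.indicator L (fun _ => (1:ℂ)) u := by
          by_cases hu : u ∈ L
          · have hau : a + u ∈ L := by
              show ‖((a + u : ↥(F.nil)) : Matrix (Fin n) (Fin n) ℚ_[p])‖ ≤ (p:ℝ)^k
              rw [hcoe]
              exact le_trans (mat_norm_add_le _ _) (max_le haL hu)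
            rw [Set.indicator_of_mem hau, Set.indicator_of_mem hu]
          · have hau : a + u ∉ L := by
              intro hmem
              refine hu ?_
              show ‖(u : Matrix (Fin n) (Fin n) ℚ_[p])‖ ≤ (p:ℝ)^k
              have hueq : (u : Matrix (Fin n) (Fin n) ℚ_[p])
                  = ((a + u : ↥(F.nil)) : Matrix (Fin n) (Fin n) ℚ_[p])
                    + (-(a : Matrix (Fin n) (Fin n) ℚ_[p])) := by
                rw [hcoe]; abel
              rw [hueq]
              refine le_trans (mat_norm_add_le _ _) (max_le hmem ?_)
              rw [norm_neg]
              exact haL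
            rw [Set.indicator_of_notMem hau, Set.indicator_of_notMem hu]
        have htreq : (Z * (X + ((a + u : ↥(F.nil)) : Matrix (Fin n) (Fin n) ℚ_[p]))).trace
            = (Z * (a : Matrix (Fin n) (Fin n) ℚ_[p])).trace
              + (Z * (X + (u : Matrix (Fin n) (Fin n) ℚ_[p]))).trace := by
          rw [hcoe]
          rw [show X + ((a : Matrix (Fin n) (Fin n) ℚ_[p])
              + (u : Matrix (Fin n) (Fin n) ℚ_[p]))
            = (a : Matrix (Fin n) (Fin n) ℚ_[p]) + (X + (u : Matrix (Fin n) (Fin n) ℚ_[p]))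
            from by abel]
          rw [Matrix.mul_add, Matrix.trace_add]
        rw [hG]
        simp only []
        rw [hindeq, htreq, AddChar.map_add_eq_mul]
        ring
      rw [MeasureTheory.integral_congr_ae (Filter.Eventually.of_forall hGa)] at htrans
      rw [MeasureTheory.integral_const_mul] at htrans
      have hIz : (∫ u, G u Z ∂ν)
          * (ψ ((Z * (a : Matrix (Fin n) (Fin n) ℚ_[p])).trace) - 1) = 0 := by
        rw [mul_sub, mul_one, mul_comm, htrans, sub_self]
      rcases mul_eq_zero.1 hIz with h | h
      · exact h
      · exact absurd (by linear_combination h) hψa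
  calc (∫ u : ↥F.nil, fhat (X + (u : Matrix (Fin n) (Fin n) ℚ_[p])) ∂ν)
      = ∫ u : ↥F.nil, ∫ Z, G u Z ∂μ ∂ν :=
        MeasureTheory.integral_congr_ae (Filter.Eventually.of_forall step1)
    _ = ∫ Z, ∫ u, G u Z ∂ν ∂μ := MeasureTheory.integral_integral_swap hInt
    _ = 0 := by
        rw [MeasureTheory.integral_congr_ae (Filter.Eventually.of_forall hinner)]
        exact MeasureTheory.integral_zero _ _
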